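/- Let n, m, k be natural numbers such that n + m + k is odd, or such that one of the triangle inequalities n ≤ m + k, m ≤ n + k, k ≤ n + m fails. Then every polynomial f in the six complex variables x₁, x₂, y₁, y₂, z₁, z₂ that is homogeneous of degree n in (x₁, x₂), of degree m in (y₁, y₂), of degree k in (z₁, z₂), and satisfies f(xg, yg, zg) = f(x, y, z) for all g ∈ SU(2), is identically zero. -/

import Mathlib

set_option autoImplicit false

open MvPolynomial

/-- The Fock inner product on polynomials: monomials are pairwise orthogonal and
`‖∏ Xᵢ^{kᵢ}‖² = ∏ kᵢ!`. -/
noncomputable def fockInner (f g : MvPolynomial (Fin 6) ℂ) : ℂ :=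
  ∑ d ∈ f.support, f.coeff d * star (g.coeff d) * ∏ i, ((d i).factorial : ℂ)

/-- `Ξ[α,β,γ] = (x₁y₂−x₂y₁)^α (y₁z₂−y₂z₁)^γ (z₁x₂−z₂x₁)^β`, with variables
`x₁,x₂,y₁,y₂,z₁,z₂` numbered `0,…,5`. -/
noncomputable def XiPoly (α β γ : ℕ) : MvPolynomial (Fin 6) ℂ :=
  (X 0 * X 3 - X 1 * X 2) ^ α * (X 2 * X 5 - X 3 * X 4) ^ γ * (X 4 * X 1 - X 5 * X 0) ^ β

/-- The action `(T(A)⊗T(B)⊗T(C)) f (x,y,z) = f(xA, yB, zC)` of a triple of `2×2` matrices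
on polynomials in six variables. -/
noncomputable def actTriple (A B M : Matrix (Fin 2) (Fin 2) ℂ)
    (f : MvPolynomial (Fin 6) ℂ) : MvPolynomial (Fin 6) ℂ :=
  MvPolynomial.aeval
    ![C (A 0 0) * X 0 + C (A 1 0) * X 1,
      C (A 0 1) * X 0 + C (A 1 1) * X 1,
      C (B 0 0) * X 2 + C (B 1 0) * X 3,
      C (B 0 1) * X 2 + C (B 1 1) * X 3,
      C (M 0 0) * X 4 + C (M 1 0) * X 5,
      C (M 0 1) * X 4 + C (M 1 1) * X 5] f

/-- The spherical function `Φ_{α,β,γ}(A,B,C)`. -/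
noncomputable def PhiSph (α β γ : ℕ) (A B M : Matrix (Fin 2) (Fin 2) ℂ) : ℂ :=
  fockInner (actTriple A B M (XiPoly α β γ)) (XiPoly α β γ)

namespace NoInv

noncomputable def actVec (A : Matrix (Fin 2) (Fin 2) ℂ) : Fin 6 → MvPolynomial (Fin 6) ℂ
  | 0 => C (A 0 0) * X 0 + C (A 1 0) * X 1
  | 1 => C (A 0 1) * X 0 + C (A 1 1) * X 1
  | 2 => C (A 0 0) * X 2 + C (A 1 0) * X 3
  | 3 => C (A 0 1) * X 2 + C (A 1 1) * X 3
  | 4 => C (A 0 0) * X 4 + C (A 1 0) * X 5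
  | 5 => C (A 0 1) * X 4 + C (A 1 1) * X 5

noncomputable def act1 (A : Matrix (Fin 2) (Fin 2) ℂ) (f : MvPolynomial (Fin 6) ℂ) :
    MvPolynomial (Fin 6) ℂ := bind₁ (actVec A) f

lemma actTriple_eq_act1 (A : Matrix (Fin 2) (Fin 2) ℂ) (f : MvPolynomial (Fin 6) ℂ) :
    actTriple A A A f = act1 A f := by
  have hv : (![C (A 0 0) * X 0 + C (A 1 0) * X 1,
      C (A 0 1) * X 0 + C (A 1 1) * X 1,
      C (A 0 0) * X 2 + C (A 1 0) * X 3,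
      C (A 0 1) * X 2 + C (A 1 1) * X 3,
      C (A 0 0) * X 4 + C (A 1 0) * X 5,
      C (A 0 1) * X 4 + C (A 1 1) * X 5] : Fin 6 → MvPolynomial (Fin 6) ℂ) = actVec A := by
    funext i; fin_cases i <;> rfl
  show aeval _ f = _
  rw [hv]
  rfl

lemma act1_comp (A B : Matrix (Fin 2) (Fin 2) ℂ) (f : MvPolynomial (Fin 6) ℂ) :
    act1 B (act1 A f) = act1 (B * A) f := by
  unfold act1
  rw [bind₁_bind₁]
  have hv : (fun i => bind₁ (actVec B) (actVec A i)) = actVec (B * A) := by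
    funext i
    fin_cases i <;>
      simp [actVec, Matrix.mul_apply, Fin.sum_univ_two] <;> ring
  rw [hv]

lemma act1_one (f : MvPolynomial (Fin 6) ℂ) : act1 1 f = f := by
  have h : actVec 1 = fun i => (X i : MvPolynomial (Fin 6) ℂ) := by
    funext i
    fin_cases i <;> simp [actVec, Matrix.one_apply]
  rw [act1, h]
  exact congrFun (congrArg DFunLike.coe bind₁_X_left) f


noncomputable def genVec : Fin 6 → MvPolynomial (Fin 6) (MvPolynomial (Fin 4) ℂ)
  | 0 => C (X 0) * X 0 + C (X 2) * X 1
  | 1 => C (X 1) * X 0 + C (X 3) * X 1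
  | 2 => C (X 0) * X 2 + C (X 2) * X 3
  | 3 => C (X 1) * X 2 + C (X 3) * X 3
  | 4 => C (X 0) * X 4 + C (X 2) * X 5
  | 5 => C (X 1) * X 4 + C (X 3) * X 5

noncomputable def genAct (f : MvPolynomial (Fin 6) ℂ) :
    MvPolynomial (Fin 6) (MvPolynomial (Fin 4) ℂ) := aeval (R := ℂ) genVec f

noncomputable def entriesOf (A : Matrix (Fin 2) (Fin 2) ℂ) : Fin 4 → ℂ
  | 0 => A 0 0
  | 1 => A 0 1
  | 2 => A 1 0
  | 3 => A 1 1

lemma genAct_spec (A : Matrix (Fin 2) (Fin 2) ℂ) (f : MvPolynomial (Fin 6) ℂ) :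
    MvPolynomial.map (eval (entriesOf A)) (genAct f) = act1 A f := by
  have key : (MvPolynomial.map (eval (entriesOf A))).comp
        ((aeval (R := ℂ) genVec : MvPolynomial (Fin 6) ℂ →ₐ[ℂ]
          MvPolynomial (Fin 6) (MvPolynomial (Fin 4) ℂ)) :
            MvPolynomial (Fin 6) ℂ →+* MvPolynomial (Fin 6) (MvPolynomial (Fin 4) ℂ))
      = ((bind₁ (actVec A) : MvPolynomial (Fin 6) ℂ →ₐ[ℂ] MvPolynomial (Fin 6) ℂ) :
          MvPolynomial (Fin 6) ℂ →+* MvPolynomial (Fin 6) ℂ) := by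
    apply MvPolynomial.ringHom_ext
    · intro r
      simp [genAct, aeval_C, algebraMap_eq]
    · intro i
      fin_cases i <;>
        simp [genVec, actVec, entriesOf]
  exact RingHom.congr_fun key f


noncomputable def famMat (E : Fin 4 → Polynomial ℂ) (u : ℂ) : Matrix (Fin 2) (Fin 2) ℂ :=
  !![u⁻¹ * (E 0).eval u, u⁻¹ * (E 1).eval u; u⁻¹ * (E 2).eval u, u⁻¹ * (E 3).eval u]

lemma entriesOf_famMat (E : Fin 4 → Polynomial ℂ) (u : ℂ) :
    entriesOf (famMat E u) = fun j => u⁻¹ * (E j).eval u := by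
  funext j; fin_cases j <;> rfl

lemma extend_invariance (f : MvPolynomial (Fin 6) ℂ) (E : Fin 4 → Polynomial ℂ)
    (H : ∀ t : ℝ, act1 (famMat E (Complex.exp (t * Complex.I))) f = f) :
    ∀ u : ℂ, u ≠ 0 → act1 (famMat E u) f = f := by
  have key : ∀ v : ℂ, ∀ d : Fin 6 →₀ ℕ, coeff d (act1 (famMat E v) f)
      = eval (fun j => v⁻¹ * (E j).eval v) (coeff d (genAct f)) := by
    intro v d
    rw [← genAct_spec, coeff_map, entriesOf_famMat]
  intro u hu
  apply MvPolynomial.ext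
  intro d
  set P : MvPolynomial (Fin 4) ℂ := coeff d (genAct f) with hP
  set N := P.totalDegree with hN
  set q : Polynomial ℂ := (∑ m ∈ P.support, Polynomial.C (MvPolynomial.coeff m P)
      * (∏ j, (E j) ^ (m j)) * Polynomial.X ^ (N - (∑ j, m j)))
      - Polynomial.C (coeff d f) * Polynomial.X ^ N with hq
  have hsumle : ∀ m ∈ P.support, (∑ j, m j) ≤ N := by
    intro m hm
    have h1 := MvPolynomial.le_totalDegree hm
    rwa [Finsupp.sum_fintype _ _ (fun i => rfl)] at h1
  have hqev : ∀ v : ℂ, v ≠ 0 →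
      q.eval v = v ^ N * (coeff d (act1 (famMat E v) f) - coeff d f) := by
    intro v hv
    rw [key v d, ← hP, MvPolynomial.eval_eq', hq]
    simp only [Polynomial.eval_sub, Polynomial.eval_finset_sum, Polynomial.eval_mul,
      Polynomial.eval_pow, Polynomial.eval_C, Polynomial.eval_X, Polynomial.eval_prod]
    rw [mul_sub, Finset.mul_sum]
    refine congrArg₂ (· - ·) (Finset.sum_congr rfl fun m hm => ?_) (by ring)
    have expand : ∏ j, (v⁻¹ * (E j).eval v) ^ (m j)
        = (v ^ (∑ j, m j))⁻¹ * ∏ j, ((E j).eval v) ^ (m j) := by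
      simp only [mul_pow]
      rw [Finset.prod_mul_distrib, Finset.prod_pow_eq_pow_sum, inv_pow]
    rw [expand, pow_sub₀ v hv (hsumle m hm)]
    ring
  have hroot : {x : ℂ | q.IsRoot x}.Infinite := by
    have hinj : Set.InjOn (fun t : ℝ => Complex.exp (t * Complex.I)) (Set.Ioo 0 1) := by
      intro a ha b hb hab
      simp only [Complex.exp_eq_exp_iff_exists_int] at hab
      obtain ⟨nn, hnn⟩ := hab
      have hC : (a : ℂ) = ((b + nn * (2 * Real.pi) : ℝ) : ℂ) := by
        push_cast
        have hI : (Complex.I : ℂ) ≠ 0 := Complex.I_ne_zero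
        have := mul_right_cancel₀ hI (by linear_combination hnn :
          (a : ℂ) * Complex.I = (b + nn * (2 * Real.pi)) * Complex.I)
        linear_combination this
      have hre : a = b + nn * (2 * Real.pi) := Complex.ofReal_inj.mp hC
      have hlt : |a - b| < 1 := by
        rw [abs_sub_lt_iff]
        constructor <;> linarith [ha.1, ha.2, hb.1, hb.2]
      by_cases hn0 : nn = 0
      · rw [hn0] at hre; push_cast at hre; linarith
      · exfalso
        have hpi : (3 : ℝ) < Real.pi := Real.pi_gt_three
        have habs : (1 : ℝ) ≤ |(nn : ℝ)| := by
          have := Int.one_le_abs (by exact_mod_cast hn0 : nn ≠ 0)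
          exact_mod_cast this
        have habs2 : |a - b| = |(nn : ℝ)| * |2 * Real.pi| := by
          rw [hre, show b + nn * (2*Real.pi) - b = (nn : ℝ) * (2*Real.pi) by ring, abs_mul]
        have hpi2 : |2 * Real.pi| = 2 * Real.pi := abs_of_pos (by nlinarith)
        rw [habs2, hpi2] at hlt
        nlinarith [abs_nonneg ((nn:ℝ))]
    have hIoo : (Set.Ioo (0:ℝ) 1).Infinite :=
      Set.infinite_coe_iff.mp (Set.Ioo.infinite (by norm_num))
    refine (hIoo.image hinj).mono ?_
    rintro x ⟨t, ht, rfl⟩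
    show q.IsRoot _
    have := hqev (Complex.exp (t * Complex.I)) (Complex.exp_ne_zero _)
    rw [H t] at this
    simpa [Polynomial.IsRoot] using this
  have hq0 : q = 0 := Polynomial.eq_zero_of_infinite_isRoot q hroot
  have := hqev u hu
  rw [hq0] at this
  simp only [Polynomial.eval_zero] at this
  have h2 := (mul_eq_zero.mp this.symm).resolve_left (pow_ne_zero _ hu)
  exact sub_eq_zero.mp h2
end NoInv
section Chunk3
open MvPolynomial
namespace NoInv

noncomputable def Dmat (u : ℂ) : Matrix (Fin 2) (Fin 2) ℂ := !![u, 0; 0, u⁻¹]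

noncomputable def Rmat (c s : ℂ) : Matrix (Fin 2) (Fin 2) ℂ := !![c, s; -s, c]

noncomputable def ED : Fin 4 → Polynomial ℂ
  | 0 => Polynomial.X ^ 2
  | 1 => 0
  | 2 => 0
  | 3 => 1

noncomputable def ER : Fin 4 → Polynomial ℂ
  | 0 => Polynomial.C (1/2 : ℂ) * (Polynomial.X ^ 2 + 1)
  | 1 => Polynomial.C (-(Complex.I)/2) * (Polynomial.X ^ 2 - 1)
  | 2 => Polynomial.C (Complex.I/2) * (Polynomial.X ^ 2 - 1)
  | 3 => Polynomial.C (1/2 : ℂ) * (Polynomial.X ^ 2 + 1)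

lemma famMat_ED (u : ℂ) (hu : u ≠ 0) : famMat ED u = Dmat u := by
  ext i j
  fin_cases i <;> fin_cases j <;>
    simp [famMat, Dmat, ED] <;> field_simp <;> ring

noncomputable def cpar (u : ℂ) : ℂ := (u + u⁻¹) / 2
noncomputable def spar (u : ℂ) : ℂ := (u - u⁻¹) / (2 * Complex.I)

lemma famMat_ER (u : ℂ) (hu : u ≠ 0) : famMat ER u = Rmat (cpar u) (spar u) := by
  ext i j
  fin_cases i <;> fin_cases j <;>
    simp [famMat, Rmat, ER, cpar, spar] <;>
    field_simp [Complex.I_ne_zero] <;>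
    (first
      | ring1
      | linear_combination (2*u*(u^2-1)) * Complex.I_sq
      | linear_combination (-2*u*(u^2-1)) * Complex.I_sq
      | linear_combination (2*u - 2*u^3) * Complex.I_sq
      | linear_combination (2*u^3 - 2*u) * Complex.I_sq
      | linear_combination (1 - u^2) * Complex.I_sq
      | linear_combination (u^2 - 1) * Complex.I_sq)

lemma cs_par_one (u : ℂ) (hu : u ≠ 0) : cpar u ^ 2 + spar u ^ 2 = 1 := by
  unfold cpar spar
  have hI := Complex.I_ne_zero
  field_simp
  ring_nf
  (first
    | ring1
    | linear_combination (2*u - 2*u^3) * Complex.I_sq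
    | linear_combination (2*u^3 - 2*u) * Complex.I_sq
    | linear_combination (4*u^2 - 8*u^4 + 4*u^6) * Complex.I_sq
    | linear_combination (1 - 2*u^2 + u^4) * Complex.I_sq)

end NoInv
end Chunk3
section Chunk4
open MvPolynomial
namespace NoInv

lemma conj_exp_circle (t : ℝ) :
    (starRingEnd ℂ) (Complex.exp ((t : ℂ) * Complex.I)) = (Complex.exp ((t : ℂ) * Complex.I))⁻¹ := by
  rw [← Complex.exp_conj, map_mul, Complex.conj_ofReal, Complex.conj_I, ← Complex.exp_neg]
  ring_nf

lemma Dmat_mem (w : ℂ) (hw : w ≠ 0) (hconj : (starRingEnd ℂ) w = w⁻¹) :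
    Dmat w ∈ Matrix.specialUnitaryGroup (Fin 2) ℂ := by
  rw [Matrix.mem_specialUnitaryGroup_iff]
  constructor
  · rw [Matrix.mem_unitaryGroup_iff]
    ext i j
    fin_cases i <;> fin_cases j <;>
      simp [Dmat, Matrix.mul_apply, Fin.sum_univ_two, Matrix.star_apply,
        Matrix.one_apply, hconj] <;>
      field_simp
  · simp [Dmat, Matrix.det_fin_two]
    field_simp

lemma Rmat_mem (c s : ℂ) (hcs : c ^ 2 + s ^ 2 = 1) (hc : (starRingEnd ℂ) c = c)
    (hs : (starRingEnd ℂ) s = s) : Rmat c s ∈ Matrix.specialUnitaryGroup (Fin 2) ℂ := by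
  rw [Matrix.mem_specialUnitaryGroup_iff]
  constructor
  · rw [Matrix.mem_unitaryGroup_iff]
    ext i j
    fin_cases i <;> fin_cases j <;>
      simp [Rmat, Matrix.mul_apply, Fin.sum_univ_two, Matrix.star_apply,
        Matrix.one_apply, hc, hs] <;>
      (first | ring1 | linear_combination hcs | linear_combination -hcs)
  · rw [Matrix.det_fin_two]
    simp [Rmat]
    linear_combination hcs

lemma torus_inv (f : MvPolynomial (Fin 6) ℂ)
    (hSU : ∀ g : Matrix.specialUnitaryGroup (Fin 2) ℂ,
      act1 (g : Matrix (Fin 2) (Fin 2) ℂ) f = f) :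
    ∀ u : ℂ, u ≠ 0 → act1 (Dmat u) f = f := by
  intro u hu
  rw [← famMat_ED u hu]
  refine extend_invariance f ED ?_ u hu
  intro t
  have hw : Complex.exp ((t : ℂ) * Complex.I) ≠ 0 := Complex.exp_ne_zero _
  rw [famMat_ED _ hw]
  exact hSU ⟨Dmat _, Dmat_mem _ hw (conj_exp_circle t)⟩

lemma rot_inv (f : MvPolynomial (Fin 6) ℂ)
    (hSU : ∀ g : Matrix.specialUnitaryGroup (Fin 2) ℂ,
      act1 (g : Matrix (Fin 2) (Fin 2) ℂ) f = f) :
    ∀ c s : ℂ, c ^ 2 + s ^ 2 = 1 → act1 (Rmat c s) f = f := by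
  have hfam : ∀ t : ℝ, act1 (famMat ER (Complex.exp ((t : ℂ) * Complex.I))) f = f := by
    intro t
    set w := Complex.exp ((t : ℂ) * Complex.I) with hwdef
    have hw : w ≠ 0 := Complex.exp_ne_zero _
    have hconj : (starRingEnd ℂ) w = w⁻¹ := conj_exp_circle t
    rw [famMat_ER _ hw]
    have hcc : (starRingEnd ℂ) (cpar w) = cpar w := by
      simp [cpar, map_add, map_inv₀, hconj, inv_inv, map_div₀, map_ofNat]
      ring
    have hss : (starRingEnd ℂ) (spar w) = spar w := by
      simp [spar, map_sub, map_inv₀, hconj, inv_inv, map_div₀, Complex.conj_I, map_ofNat]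
      field_simp [Complex.I_ne_zero]
      ring
    exact hSU ⟨Rmat _ _, Rmat_mem _ _ (cs_par_one w hw) hcc hss⟩
  intro c s hcs
  have hu : c + Complex.I * s ≠ 0 := by
    intro h0
    have hmul : (c + Complex.I * s) * (c - Complex.I * s) = 1 := by
      linear_combination hcs - (s^2 : ℂ) * Complex.I_sq
    rw [h0, zero_mul] at hmul
    exact zero_ne_one hmul
  have hc' : cpar (c + Complex.I * s) = c := by
    unfold cpar
    field_simp
    linear_combination (-1 : ℂ) * hcs + s^2 * Complex.I_sq
  have hs' : spar (c + Complex.I * s) = s := by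
    unfold spar
    field_simp [Complex.I_ne_zero]
    linear_combination hcs - s^2 * Complex.I_sq
  have hpar : Rmat c s = famMat ER (c + Complex.I * s) := by
    rw [famMat_ER _ hu, hc', hs']
  rw [hpar]
  exact extend_invariance f ER hfam _ hu

end NoInv
end Chunk4
section Chunk5
open MvPolynomial
namespace NoInv

lemma act1_mul (f : MvPolynomial (Fin 6) ℂ) (A B : Matrix (Fin 2) (Fin 2) ℂ)
    (hA : act1 A f = f) (hB : act1 B f = f) : act1 (A * B) f = f := by
  rw [← act1_comp B A f, hB, hA]

section WithInv
variable (f : MvPolynomial (Fin 6) ℂ)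
variable (hD : ∀ u : ℂ, u ≠ 0 → act1 (Dmat u) f = f)
variable (hR : ∀ c s : ℂ, c ^ 2 + s ^ 2 = 1 → act1 (Rmat c s) f = f)

include hD hR in
lemma nplus_inv : ∀ s : ℂ, act1 !![1, s; 0, 1] f = f := by
  have good : ∀ s : ℂ, s ^ 2 + 4 ≠ 0 → act1 !![1, s; 0, 1] f = f := by
    intro s hs4
    obtain ⟨r, hr⟩ := IsAlgClosed.exists_pow_nat_eq (k := ℂ) (s ^ 2 + 4) (n := 2) (by norm_num)
    have hrne : r ≠ 0 := by
      intro h0; rw [h0] at hr; exact hs4 (by simpa using hr.symm)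
    have hrs : r - s ≠ 0 := by
      intro h0
      have : r = s := by linear_combination h0
      rw [this] at hr
      have : (4 : ℂ) = 0 := by linear_combination -hr
      norm_num at this
    obtain ⟨b, hb, h1b⟩ : ∃ b : ℂ, b ^ 2 + s * b - 1 = 0 ∧ 1 + b ^ 2 ≠ 0 := by
      refine ⟨(-s + r) / 2, by linear_combination hr / 4, ?_⟩
      intro h0
      have hrr : r * (r - s) = 0 := by linear_combination 2 * h0 + hr / 2
      rcases mul_eq_zero.mp hrr with h | h
      · exact hrne h
      · exact hrs h
    have hbne : b ≠ 0 := by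
      intro h0; rw [h0] at hb; norm_num at hb
    obtain ⟨s1, hs1⟩ := IsAlgClosed.exists_pow_nat_eq (k := ℂ) ((1 + b ^ 2)⁻¹) (n := 2) (by norm_num)
    have hs1' : s1 ^ 2 * (1 + b ^ 2) = 1 := by
      rw [hs1]; field_simp
    have hcs1 : (s1 * b) ^ 2 + s1 ^ 2 = 1 := by linear_combination hs1'
    have hcs2 : s1 ^ 2 + (-(s1 * b)) ^ 2 = 1 := by linear_combination hs1'
    have hmat : Rmat (s1 * b) s1 * (Dmat b * Rmat s1 (-(s1 * b))) = !![1, s; 0, 1] := by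
      ext i j
      fin_cases i <;> fin_cases j <;>
        simp [Rmat, Dmat, Matrix.mul_apply, Fin.sum_univ_two] <;>
        field_simp <;>
        (first
          | ring1
          | linear_combination hs1'
          | linear_combination (1 - b ^ 2) * hs1' - hb
          | linear_combination (b ^ 2 - 1) * hs1' + hb
          | linear_combination b * ((1 - b ^ 2) * hs1' - hb)
          | linear_combination -((1 - b ^ 2) * hs1' - hb)
          | linear_combination b ^ 2 * hs1'
          | linear_combination b * hs1'
          | linear_combination -hs1')
    rw [← hmat]
    exact act1_mul f _ _ (hR _ _ hcs1) (act1_mul f _ _ (hD b hbne) (hR _ _ hcs2))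
  intro s
  by_cases hs4 : s ^ 2 + 4 = 0
  · have h2 : (s / 2) ^ 2 + 4 ≠ 0 := by
      have h3 : (s / 2) ^ 2 + 4 = 3 := by linear_combination hs4 / 4
      rw [h3]; norm_num
    have hm : (!![1, s; 0, 1] : Matrix (Fin 2) (Fin 2) ℂ) = !![1, s/2; 0, 1] * !![1, s/2; 0, 1] := by
      ext i j
      fin_cases i <;> fin_cases j <;>
        simp [Matrix.mul_apply, Fin.sum_univ_two] <;> ring
    rw [hm]
    exact act1_mul f _ _ (good _ h2) (good _ h2)
  · exact good s hs4

include hD hR in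
lemma nminus_inv : ∀ s : ℂ, act1 !![1, 0; s, 1] f = f := by
  intro s
  have hm : (!![1, 0; s, 1] : Matrix (Fin 2) (Fin 2) ℂ)
      = Rmat 0 1 * (!![1, -s; 0, 1] * Rmat 0 (-1)) := by
    ext i j
    fin_cases i <;> fin_cases j <;>
      simp [Rmat, Matrix.mul_apply, Fin.sum_univ_two] <;> ring
  rw [hm]
  refine act1_mul f _ _ (hR 0 1 (by norm_num)) (act1_mul f _ _ (nplus_inv f hD hR (-s)) (hR 0 (-1) (by norm_num)))

include hD hR in
lemma sl2_inv : ∀ M : Matrix (Fin 2) (Fin 2) ℂ, M.det = 1 → act1 M f = f := by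
  have key : ∀ M : Matrix (Fin 2) (Fin 2) ℂ, M.det = 1 → M 0 0 ≠ 0 → act1 M f = f := by
    intro M hdet h00
    have hdet2 : M 0 0 * M 1 1 - M 0 1 * M 1 0 = 1 := by
      rw [← Matrix.det_fin_two]; exact hdet
    have hm : M = !![1, 0; M 1 0 / M 0 0, 1] * (Dmat (M 0 0) * !![1, M 0 1 / M 0 0; 0, 1]) := by
      ext i j
      fin_cases i <;> fin_cases j <;>
        simp [Dmat, Matrix.mul_apply, Fin.sum_univ_two] <;>
        field_simp <;>
        (first | ring1 | linear_combination -hdet2 | linear_combination hdet2 | linear_combination M 0 0 * hdet2)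
    rw [hm]
    exact act1_mul f _ _ (nminus_inv f hD hR _) (act1_mul f _ _ (hD _ h00) (nplus_inv f hD hR _))
  intro M hdet
  by_cases h00 : M 0 0 = 0
  · have h10 : M 1 0 ≠ 0 := by
      intro h
      rw [Matrix.det_fin_two, h00, h] at hdet
      norm_num at hdet
    have hWW : Rmat 0 (-1) * Rmat 0 1 = (1 : Matrix (Fin 2) (Fin 2) ℂ) := by
      ext i j
      fin_cases i <;> fin_cases j <;>
        simp [Rmat, Matrix.mul_apply, Fin.sum_univ_two, Matrix.one_apply]
    have hm : M = Rmat 0 (-1) * (Rmat 0 1 * M) := by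
      rw [← Matrix.mul_assoc, hWW, Matrix.one_mul]
    have hdetR : (Rmat 0 1 : Matrix (Fin 2) (Fin 2) ℂ).det = 1 := by
      rw [Matrix.det_fin_two]; simp [Rmat]
    have hdet' : (Rmat 0 1 * M).det = 1 := by
      rw [Matrix.det_mul, hdetR, hdet, one_mul]
    have hM00 : (Rmat 0 1 * M) 0 0 ≠ 0 := by
      have : (Rmat 0 1 * M) 0 0 = M 1 0 := by
        simp [Rmat, Matrix.mul_apply, Fin.sum_univ_two]
      rw [this]; exact h10
    rw [hm]
    exact act1_mul f _ _ (hR 0 (-1) (by norm_num)) (key _ hdet' hM00)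
  · exact key M hdet h00

end WithInv
end NoInv
end Chunk5
section Chunk6
open MvPolynomial
namespace NoInv

lemma eval_bind (pt : Fin 6 → ℂ) (v : Fin 6 → MvPolynomial (Fin 6) ℂ)
    (f : MvPolynomial (Fin 6) ℂ) :
    eval pt (bind₁ v f) = eval (fun i => eval pt (v i)) f := by
  have h := aeval_bind₁ (S := ℂ) pt v f
  exact h

noncomputable def diagCoe (u : ℂ) : Fin 6 → ℂ
  | 0 => u
  | 1 => u⁻¹
  | 2 => u
  | 3 => u⁻¹
  | 4 => u
  | 5 => u⁻¹

lemma coeff_act1_Dmat (u : ℂ) (f : MvPolynomial (Fin 6) ℂ) (d : Fin 6 →₀ ℕ) :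
    coeff d (act1 (Dmat u) f)
      = u ^ (d 0 + d 2 + d 4) * u⁻¹ ^ (d 1 + d 3 + d 5) * coeff d f := by
  have hv : actVec (Dmat u) = fun i => C (diagCoe u i) * X i := by
    funext i
    fin_cases i <;> simp [actVec, Dmat, diagCoe]
  have expand : act1 (Dmat u) f
      = ∑ e ∈ f.support, monomial e ((∏ i ∈ e.support, diagCoe u i ^ e i) * coeff e f) := by
    rw [act1, hv]
    conv_lhs => rw [f.as_sum]
    rw [map_sum]
    apply Finset.sum_congr rfl
    intro e he
    rw [bind₁_monomial]
    have : ∏ i ∈ e.support, (C (diagCoe u i) * X i) ^ e i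
        = C (∏ i ∈ e.support, diagCoe u i ^ e i) * ∏ i ∈ e.support, (X i : MvPolynomial (Fin 6) ℂ) ^ e i := by
      rw [map_prod]
      rw [← Finset.prod_mul_distrib]
      apply Finset.prod_congr rfl
      intro i _
      rw [mul_pow, map_pow]
    rw [this, prod_X_pow_eq_monomial, ← mul_assoc, ← map_mul]
    rw [show (C ((coeff e f) * ∏ i ∈ e.support, diagCoe u i ^ e i) : MvPolynomial (Fin 6) ℂ)
          * monomial e 1 = monomial e ((∏ i ∈ e.support, diagCoe u i ^ e i) * coeff e f) from ?_]
    · rw [C_mul_monomial]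
      ring_nf
  rw [expand, coeff_sum]
  rw [Finset.sum_eq_single d (fun e _ hne => by rw [coeff_monomial, if_neg hne])
    (fun hnd => by rw [coeff_monomial, if_pos rfl,
      MvPolynomial.notMem_support_iff.mp hnd, mul_zero])]
  rw [coeff_monomial, if_pos rfl]
  have hprod : ∏ i ∈ d.support, diagCoe u i ^ d i = ∏ i : Fin 6, diagCoe u i ^ d i := by
    apply Finset.prod_subset (Finset.subset_univ _)
    intro i _ hi
    rw [Finsupp.notMem_support_iff.mp hi, pow_zero]
  rw [hprod, Fin.prod_univ_six]
  simp only [diagCoe]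
  ring

end NoInv
end Chunk6
section Chunk7
open MvPolynomial
namespace NoInv

noncomputable def pt0 (t1 t2 : ℂ) : Fin 6 → ℂ
  | 0 => 1
  | 1 => 0
  | 2 => 0
  | 3 => 1
  | 4 => t1
  | 5 => t2

lemma eval_scale (f : MvPolynomial (Fin 6) ℂ) (n : ℕ)
    (hx : ∀ d ∈ f.support, d 0 + d 1 = n) (u : ℂ) (p q : Fin 6 → ℂ)
    (h0 : q 0 = u * p 0) (h1 : q 1 = u * p 1) (h2 : q 2 = p 2) (h3 : q 3 = p 3)
    (h4 : q 4 = p 4) (h5 : q 5 = p 5) :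
    eval q f = u ^ n * eval p f := by
  rw [eval_eq', eval_eq', Finset.mul_sum]
  apply Finset.sum_congr rfl
  intro d hd
  rw [Fin.prod_univ_six, Fin.prod_univ_six, h0, h1, h2, h3, h4, h5, ← hx d hd]
  rw [mul_pow, mul_pow]
  ring

lemma slice_vanish (f : MvPolynomial (Fin 6) ℂ) (n m k : ℕ)
    (hhom : ∀ d ∈ f.support, d 0 + d 1 = n ∧ d 2 + d 3 = m ∧ d 4 + d 5 = k)
    (hSL : ∀ M : Matrix (Fin 2) (Fin 2) ℂ, M.det = 1 → act1 M f = f)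
    (hcase : Odd (n + m + k) ∨ m + k < n ∨ n + k < m) :
    ∀ t1 t2 : ℂ, eval (pt0 t1 t2) f = 0 := by
  have hkill : ∀ d ∈ f.support, d 1 = 0 → d 2 = 0 → False := by
    intro d hd h1 h2
    obtain ⟨e1, e2, e3⟩ := hhom d hd
    have hDdet : (Dmat 2 : Matrix (Fin 2) (Fin 2) ℂ).det = 1 := by
      rw [Dmat, Matrix.det_fin_two_of]; norm_num
    have hc := congrArg (coeff d) (hSL (Dmat 2) hDdet)
    rw [coeff_act1_Dmat] at hc
    have hcoeff0 : coeff d f ≠ 0 := MvPolynomial.mem_support_iff.mp hd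
    have hA : (2:ℂ) ^ (d 0 + d 2 + d 4) * (2:ℂ)⁻¹ ^ (d 1 + d 3 + d 5) = 1 := by
      have hc' : ((2:ℂ) ^ (d 0 + d 2 + d 4) * (2:ℂ)⁻¹ ^ (d 1 + d 3 + d 5)) * coeff d f
          = 1 * coeff d f := by
        rw [one_mul]
        exact hc
      exact mul_right_cancel₀ hcoeff0 hc' 
    rw [inv_pow] at hA
    have hpow : (2:ℂ) ^ (d 0 + d 2 + d 4) = (2:ℂ) ^ (d 1 + d 3 + d 5) := by
      have h2ne : ((2:ℂ) ^ (d 1 + d 3 + d 5)) ≠ 0 := pow_ne_zero _ (by norm_num)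
      field_simp at hA
      exact hA
    have hnat : (2:ℕ) ^ (d 0 + d 2 + d 4) = 2 ^ (d 1 + d 3 + d 5) := by
      exact_mod_cast hpow
    have heq := Nat.pow_right_injective (le_refl 2) hnat
    rcases hcase with hodd | hlt | hlt
    · have := Nat.odd_iff.mp hodd
      omega
    · omega
    · omega
  intro t1 t2
  rw [eval_eq']
  apply Finset.sum_eq_zero
  intro d hd
  by_cases h1 : d 1 = 0
  · by_cases h2 : d 2 = 0
    · exact (hkill d hd h1 h2).elim
    · rw [Fin.prod_univ_six]
      simp [pt0, zero_pow h2]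
  · rw [Fin.prod_univ_six]
    simp [pt0, zero_pow h1]

noncomputable def ptQ (p : Fin 6 → ℂ) (δ : ℂ) : Fin 6 → ℂ
  | 0 => p 0 / δ
  | 1 => p 1 / δ
  | 2 => p 2
  | 3 => p 3
  | 4 => p 4
  | 5 => p 5

lemma indep_vanish (f : MvPolynomial (Fin 6) ℂ) (n m k : ℕ)
    (hhom : ∀ d ∈ f.support, d 0 + d 1 = n ∧ d 2 + d 3 = m ∧ d 4 + d 5 = k)
    (hSL : ∀ M : Matrix (Fin 2) (Fin 2) ℂ, M.det = 1 → act1 M f = f)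
    (hA1 : ∀ t1 t2 : ℂ, eval (pt0 t1 t2) f = 0) :
    ∀ p : Fin 6 → ℂ, p 0 * p 3 - p 1 * p 2 ≠ 0 → eval p f = 0 := by
  intro p hδ
  set δ := p 0 * p 3 - p 1 * p 2 with hδdef
  set M : Matrix (Fin 2) (Fin 2) ℂ := !![p 0 / δ, p 1 / δ; p 2, p 3] with hM
  have hdet : M.det = 1 := by
    rw [hM, Matrix.det_fin_two_of]
    field_simp
    exact hδdef.symm
  set t1 : ℂ := p 4 * p 3 - p 5 * p 2 with ht1
  set t2 : ℂ := (p 0 * p 5 - p 1 * p 4) / δ with ht2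
  have key := congrArg (eval (pt0 t1 t2)) (hSL M hdet)
  rw [act1, eval_bind, hA1] at key
  have hδa : p 0 * p 3 - p 2 * p 1 ≠ 0 := by
    intro h; apply hδ; linear_combination h
  have hδb : -(p 1 * p 2) + p 3 * p 0 ≠ 0 := by
    intro h; apply hδ; linear_combination h
  have hq : (fun i => eval (pt0 t1 t2) (actVec M i)) = ptQ p δ := by
    funext i
    fin_cases i <;>
      simp [actVec, pt0, ptQ, hM] <;>
      (first
        | ring1
        | (field_simp [hδa, hδb]; ring1)
        | (field_simp [hδa, hδb]; done)
        | (rw [ht1, ht2, hδdef]; field_simp [hδa, hδb]; ring1)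
        | (rw [ht1, ht2, hδdef]; field_simp [hδa, hδb]; done)
        | (rw [ht1, ht2, hδdef]; field_simp [hδa, hδb];
            rw [div_eq_iff (show p 0 * p 3 - p 1 * p 2 ≠ 0 from hδ)]; ring1))
  rw [hq] at key
  have hscale := eval_scale f n (fun d hd => (hhom d hd).1) δ (ptQ p δ) p
    (by simp [ptQ]; field_simp) (by simp [ptQ]; field_simp) rfl rfl rfl rfl
  rw [hscale, key, mul_zero]

lemma sl1 (f : MvPolynomial (Fin 6) ℂ) (n m k : ℕ)
    (hhom : ∀ d ∈ f.support, d 0 + d 1 = n ∧ d 2 + d 3 = m ∧ d 4 + d 5 = k)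
    (hSL : ∀ M : Matrix (Fin 2) (Fin 2) ℂ, M.det = 1 → act1 M f = f)
    (hcase : Odd (n + m + k) ∨ m + k < n ∨ n + k < m) :
    f = 0 := by
  have hA1 := slice_vanish f n m k hhom hSL hcase
  have hvan := indep_vanish f n m k hhom hSL hA1
  have hmul : f * (X 0 * X 3 - X 1 * X 2) = 0 := by
    apply MvPolynomial.funext
    intro x
    rw [map_mul]
    by_cases hx : x 0 * x 3 - x 1 * x 2 = 0
    · have : eval x (X 0 * X 3 - X 1 * X 2 : MvPolynomial (Fin 6) ℂ) = 0 := by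
        simp only [map_sub, map_mul, eval_X]
        exact hx
      rw [this, mul_zero, map_zero]
    · rw [hvan x hx, zero_mul, map_zero]
  have hdetp : (X 0 * X 3 - X 1 * X 2 : MvPolynomial (Fin 6) ℂ) ≠ 0 := by
    intro h0
    have := congrArg (eval (pt0 0 0)) h0
    simp only [map_sub, map_mul, eval_X, map_zero] at this
    rw [show (pt0 0 0) 0 = 1 from rfl, show (pt0 0 0) 3 = 1 from rfl,
      show (pt0 0 0) 1 = 0 from rfl, show (pt0 0 0) 2 = 0 from rfl] at this
    norm_num at this
  rcases mul_eq_zero.mp hmul with h | h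
  · exact h
  · exact absurd h hdetp

end NoInv
end Chunk7
section Chunk8
open MvPolynomial
namespace NoInv

lemma shift_inj : Function.Injective (fun i : Fin 6 => i + 2) :=
  fun a b h => by
    have := congrArg (fun x : Fin 6 => x - 2) h
    simpa using this

lemma act1_rename (A : Matrix (Fin 2) (Fin 2) ℂ) (f : MvPolynomial (Fin 6) ℂ) :
    act1 A (rename (fun i : Fin 6 => i + 2) f)
      = rename (fun i : Fin 6 => i + 2) (act1 A f) := by
  rw [act1, bind₁, aeval_rename]
  have hcomp : (rename (fun i : Fin 6 => i + 2)).comp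
        ((bind₁ (actVec A)) : MvPolynomial (Fin 6) ℂ →ₐ[ℂ] MvPolynomial (Fin 6) ℂ)
      = aeval (actVec A ∘ (fun i : Fin 6 => i + 2)) := by
    apply MvPolynomial.algHom_ext
    intro i
    rw [AlgHom.comp_apply, bind₁_X_right]
    fin_cases i <;>
      simp [actVec] <;> rfl
  calc aeval (actVec A ∘ (fun i : Fin 6 => i + 2)) f
      = ((rename (fun i : Fin 6 => i + 2)).comp
          ((bind₁ (actVec A)) : MvPolynomial (Fin 6) ℂ →ₐ[ℂ] MvPolynomial (Fin 6) ℂ)) f := by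
        rw [hcomp]
    _ = rename (fun i : Fin 6 => i + 2) (act1 A f) := rfl

lemma hhom_rename (f : MvPolynomial (Fin 6) ℂ) (n m k : ℕ)
    (hhom : ∀ d ∈ f.support, d 0 + d 1 = n ∧ d 2 + d 3 = m ∧ d 4 + d 5 = k) :
    ∀ d ∈ (rename (fun i : Fin 6 => i + 2) f).support,
      d 0 + d 1 = k ∧ d 2 + d 3 = n ∧ d 4 + d 5 = m := by
  intro d hd
  have hne := MvPolynomial.mem_support_iff.mp hd
  obtain ⟨u, humap, hu⟩ := coeff_rename_ne_zero _ _ _ hne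
  obtain ⟨e1, e2, e3⟩ := hhom u (MvPolynomial.mem_support_iff.mpr hu)
  have happ : ∀ i : Fin 6, d (i + 2) = u i := fun i => by
    rw [← humap, Finsupp.mapDomain_apply shift_inj]
  have h0 : d 0 = u 4 := by have := happ 4; rwa [show (4 : Fin 6) + 2 = 0 by decide] at this
  have h1 : d 1 = u 5 := by have := happ 5; rwa [show (5 : Fin 6) + 2 = 1 by decide] at this
  have h2 : d 2 = u 0 := by have := happ 0; rwa [show (0 : Fin 6) + 2 = 2 by decide] at this
  have h3 : d 3 = u 1 := by have := happ 1; rwa [show (1 : Fin 6) + 2 = 3 by decide] at this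
  have h4 : d 4 = u 2 := by have := happ 2; rwa [show (2 : Fin 6) + 2 = 4 by decide] at this
  have h5 : d 5 = u 3 := by have := happ 3; rwa [show (3 : Fin 6) + 2 = 5 by decide] at this
  refine ⟨?_, ?_, ?_⟩ <;> omega

end NoInv
end Chunk8


/-- if `n+m+k` is odd, or one of the triangle inequalities fails, then every
polynomial in six variables homogeneous of degree `n` in `(x₁,x₂)`, `m` in `(y₁,y₂)`,
`k` in `(z₁,z₂)` and invariant under the diagonal `SU(2)`-action is zero. -/
theorem no_invariant_vector (n m k : ℕ)
    (h : Odd (n + m + k) ∨ ¬(n ≤ m + k ∧ m ≤ n + k ∧ k ≤ n + m))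
    (f : MvPolynomial (Fin 6) ℂ)
    (hhom : ∀ d ∈ f.support, d 0 + d 1 = n ∧ d 2 + d 3 = m ∧ d 4 + d 5 = k)
    (hinv : ∀ g : Matrix.specialUnitaryGroup (Fin 2) ℂ,
      actTriple (g : Matrix (Fin 2) (Fin 2) ℂ) (g : Matrix (Fin 2) (Fin 2) ℂ)
        (g : Matrix (Fin 2) (Fin 2) ℂ) f = f) :
    f = 0 := by
  have hSU : ∀ g : Matrix.specialUnitaryGroup (Fin 2) ℂ,
      NoInv.act1 (g : Matrix (Fin 2) (Fin 2) ℂ) f = f := fun g => by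
    rw [← NoInv.actTriple_eq_act1]
    exact hinv g
  have hD := NoInv.torus_inv f hSU
  have hR := NoInv.rot_inv f hSU
  have hSL := NoInv.sl2_inv f hD hR
  by_cases hc : Odd (n + m + k) ∨ m + k < n ∨ n + k < m
  · exact NoInv.sl1 f n m k hhom hSL hc
  · push_neg at hc
    obtain ⟨hodd, hle1, hle2⟩ := hc
    have hk : n + m < k := by
      rcases h with hodd' | htri
      · exact absurd hodd' hodd
      · by_contra hk'
        exact htri ⟨by omega, by omega, by omega⟩
    have hz : rename (fun i : Fin 6 => i + 2) f = 0 := by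
      apply NoInv.sl1 _ k n m (NoInv.hhom_rename f n m k hhom)
      · intro M hM
        rw [NoInv.act1_rename, hSL M hM]
      · exact Or.inr (Or.inl (by omega))
    exact MvPolynomial.rename_injective _ NoInv.shift_inj (by rw [hz, map_zero])
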